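/- For every natural number K ≥ 1 and every real α with 0 < α ≤ 1, the sum ∑_{k=1}^{K} (1/√k) · C(K,k) · α^k · (1-α)^{K-k} is at most √6/√(K·α). -/

import Mathlib

open Finset

private lemma binom_sum_one (α : ℝ) (n : ℕ) :
    ∑ k ∈ Finset.range (n + 1), (n.choose k : ℝ) * α ^ k * (1 - α) ^ (n - k) = 1 := by
  calc ∑ k ∈ Finset.range (n + 1), (n.choose k : ℝ) * α ^ k * (1 - α) ^ (n - k)
      = (α + (1 - α)) ^ n := by
        rw [add_pow]
        exact Finset.sum_congr rfl (fun k _ => by ring)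
    _ = 1 := by norm_num

private lemma binom_inv_succ_sum_le (α : ℝ) (hα : 0 < α) (hα1 : α ≤ 1) (n : ℕ) :
    ∑ k ∈ Finset.range (n + 1),
      (n.choose k : ℝ) * α ^ k * (1 - α) ^ (n - k) / ((k : ℝ) + 1)
      ≤ 1 / (((n : ℝ) + 1) * α) := by
  have hq : (0 : ℝ) ≤ 1 - α := by linarith
  have hpos : (0 : ℝ) < ((n : ℝ) + 1) * α := by positivity
  rw [le_div_iff₀ hpos, Finset.sum_mul]
  have hterm : ∀ k ∈ Finset.range (n + 1),
      (n.choose k : ℝ) * α ^ k * (1 - α) ^ (n - k) / ((k : ℝ) + 1) * (((n : ℝ) + 1) * α)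
      = ((n + 1).choose (k + 1) : ℝ) * α ^ (k + 1) * (1 - α) ^ (n + 1 - (k + 1)) := by
    intro k hk
    have hc : ((n : ℝ) + 1) * (n.choose k : ℝ) = ((n + 1).choose (k + 1) : ℝ) * ((k : ℝ) + 1) := by
      have h2 : (n + 1) * n.choose k = (n + 1).choose (k + 1) * (k + 1) :=
        Nat.add_one_mul_choose_eq n k
      exact_mod_cast h2
    have hk1 : ((k : ℝ) + 1) ≠ 0 := by positivity
    rw [Nat.succ_sub_succ]
    field_simp
    linear_combination (α ^ (k + 1) * (1 - α) ^ (n - k)) * hc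
  rw [Finset.sum_congr rfl hterm]
  have h1 := binom_sum_one α (n + 1)
  rw [Finset.sum_range_succ'] at h1
  have hg0 : (0 : ℝ) ≤ ((n + 1).choose 0 : ℝ) * α ^ 0 * (1 - α) ^ (n + 1 - 0) := by positivity
  linarith

theorem binomial_truncated_inv_sqrt_sum_le (K : ℕ) (hK : 1 ≤ K) (α : ℝ)
    (hα : 0 < α) (hα1 : α ≤ 1) :
    ∑ k ∈ Finset.Icc 1 K,
        (1 / Real.sqrt (k : ℝ)) * (K.choose k : ℝ) * α ^ k * (1 - α) ^ (K - k)
      ≤ Real.sqrt 6 / Real.sqrt (K * α) := by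
  have hq : (0 : ℝ) ≤ 1 - α := by linarith
  set p : ℕ → ℝ := fun k => (K.choose k : ℝ) * α ^ k * (1 - α) ^ (K - k) with hp
  have hpnn : ∀ k, 0 ≤ p k := fun k => by simp only [hp]; positivity
  have hKpos : (0 : ℝ) < (K : ℝ) := by exact_mod_cast hK
  have hKα : (0 : ℝ) < (K : ℝ) * α := by positivity
  have hsub : Finset.Icc 1 K ⊆ Finset.range (K + 1) := by
    intro k hk
    simp only [Finset.mem_Icc] at hk
    simp only [Finset.mem_range]
    omega
  -- total mass ≤ 1
  have hS1 : ∑ k ∈ Finset.Icc 1 K, p k ≤ 1 := by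
    rw [← binom_sum_one α K]
    exact Finset.sum_le_sum_of_subset_of_nonneg hsub (fun k _ _ => hpnn k)
  -- second moment-type bound
  have hS2 : ∑ k ∈ Finset.Icc 1 K, p k / (k : ℝ) ≤ 2 / ((K : ℝ) * α) := by
    have h2 : ∀ k ∈ Finset.Icc 1 K, p k / (k : ℝ) ≤ 2 * (p k / ((k : ℝ) + 1)) := by
      intro k hk
      have hk1 : 1 ≤ k := (Finset.mem_Icc.1 hk).1
      have hkpos : (0 : ℝ) < (k : ℝ) := by exact_mod_cast hk1
      have hkk : (1 : ℝ) ≤ (k : ℝ) := by exact_mod_cast hk1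
      have hfrac : 1 / (k : ℝ) ≤ 2 / ((k : ℝ) + 1) := by
        rw [div_le_div_iff₀ hkpos (by linarith)]
        linarith
      calc p k / (k : ℝ) = p k * (1 / (k : ℝ)) := by ring
        _ ≤ p k * (2 / ((k : ℝ) + 1)) := mul_le_mul_of_nonneg_left hfrac (hpnn k)
        _ = 2 * (p k / ((k : ℝ) + 1)) := by ring
    calc ∑ k ∈ Finset.Icc 1 K, p k / (k : ℝ)
        ≤ ∑ k ∈ Finset.Icc 1 K, 2 * (p k / ((k : ℝ) + 1)) := Finset.sum_le_sum h2
      _ = 2 * ∑ k ∈ Finset.Icc 1 K, p k / ((k : ℝ) + 1) := by rw [Finset.mul_sum]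
      _ ≤ 2 * ∑ k ∈ Finset.range (K + 1), p k / ((k : ℝ) + 1) := by
          have := Finset.sum_le_sum_of_subset_of_nonneg hsub
            (fun k _ _ => div_nonneg (hpnn k) (by positivity : (0:ℝ) ≤ (k:ℝ) + 1))
          linarith
      _ ≤ 2 * (1 / (((K : ℝ) + 1) * α)) := by
          have := binom_inv_succ_sum_le α hα hα1 K
          linarith
      _ ≤ 2 / ((K : ℝ) * α) := by
          rw [mul_one_div, div_le_div_iff₀ (by positivity) hKα]
          nlinarith
  -- Cauchy-Schwarz
  have hCS : (∑ k ∈ Finset.Icc 1 K, 1 / Real.sqrt (k : ℝ) * p k) ^ 2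
      ≤ (∑ k ∈ Finset.Icc 1 K, p k) * ∑ k ∈ Finset.Icc 1 K, p k / (k : ℝ) := by
    apply Finset.sum_sq_le_sum_mul_sum_of_sq_eq_mul
    · intro i _; exact hpnn i
    · intro i hi
      exact div_nonneg (hpnn i) (by positivity)
    · intro i hi
      have hi1 : 1 ≤ i := (Finset.mem_Icc.1 hi).1
      have hipos : (0 : ℝ) < (i : ℝ) := by exact_mod_cast hi1
      rw [mul_pow, div_pow, one_pow, Real.sq_sqrt hipos.le]
      ring
  have hSnn : 0 ≤ ∑ k ∈ Finset.Icc 1 K, 1 / Real.sqrt (k : ℝ) * p k :=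
    Finset.sum_nonneg fun k _ => mul_nonneg (by positivity) (hpnn k)
  have hsq : (∑ k ∈ Finset.Icc 1 K, 1 / Real.sqrt (k : ℝ) * p k) ^ 2 ≤ 6 / ((K : ℝ) * α) := by
    have hS2' : 0 ≤ ∑ k ∈ Finset.Icc 1 K, p k / (k : ℝ) :=
      Finset.sum_nonneg fun k hk => div_nonneg (hpnn k) (Nat.cast_nonneg k)
    have h1 : (∑ k ∈ Finset.Icc 1 K, p k) * ∑ k ∈ Finset.Icc 1 K, p k / (k : ℝ)
        ≤ 1 * (2 / ((K : ℝ) * α)) := by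
      apply mul_le_mul hS1 hS2 hS2' (by norm_num)
    have h6 : (2 : ℝ) / ((K : ℝ) * α) ≤ 6 / ((K : ℝ) * α) := by
      rw [div_le_div_iff₀ hKα hKα]
      nlinarith
    nlinarith
  have hfinal : ∑ k ∈ Finset.Icc 1 K, 1 / Real.sqrt (k : ℝ) * p k
      ≤ Real.sqrt 6 / Real.sqrt ((K : ℝ) * α) := by
    calc ∑ k ∈ Finset.Icc 1 K, 1 / Real.sqrt (k : ℝ) * p k
        = Real.sqrt ((∑ k ∈ Finset.Icc 1 K, 1 / Real.sqrt (k : ℝ) * p k) ^ 2) :=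
          (Real.sqrt_sq hSnn).symm
      _ ≤ Real.sqrt (6 / ((K : ℝ) * α)) := Real.sqrt_le_sqrt hsq
      _ = Real.sqrt 6 / Real.sqrt ((K : ℝ) * α) := Real.sqrt_div (by norm_num) _
  calc ∑ k ∈ Finset.Icc 1 K,
        (1 / Real.sqrt (k : ℝ)) * (K.choose k : ℝ) * α ^ k * (1 - α) ^ (K - k)
      = ∑ k ∈ Finset.Icc 1 K, 1 / Real.sqrt (k : ℝ) * p k :=
        Finset.sum_congr rfl (fun k _ => by simp only [hp]; ring)
    _ ≤ Real.sqrt 6 / Real.sqrt ((K : ℝ) * α) := hfinal
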